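/- Let (X,σ) be a binary subshift that admits an uncountable choice domain 𝒯. Then for every function f : 𝒯 → {0,1} there exists η ∈ E(X) such that (η(x))₁ = f(x) for every x ∈ 𝒯; consequently, the cardinality of E(X) is strictly greater than 2^ℵ₀, i.e. (X,σ) is non-tame. -/

import Mathlib

open Filter Topology

noncomputable section

abbrev BinSeq : Type := ℕ → Bool

/-- The left shift on `{0,1}^ℕ`. -/
def binShift (x : BinSeq) : BinSeq := fun n => x (n + 1)

/-- A binary subshift: a nonempty closed shift-invariant subset of `{0,1}^ℕ`. -/
structure BinarySubshift where
  carrier : Set BinSeq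
  nonempty : carrier.Nonempty
  isClosed : IsClosed carrier
  shift_mem : ∀ x ∈ carrier, binShift x ∈ carrier

namespace BinarySubshift

variable (X : BinarySubshift)

/-- The shift map restricted to the subshift. -/
def S : X.carrier → X.carrier := fun x => ⟨binShift x, X.shift_mem x x.2⟩

/-- The (forward) Ellis semigroup `E(X)`: the closure of `{σⁿ : n ≥ 1}` in `X^X`. -/
def Ellis : Set (X.carrier → X.carrier) := closure (Set.range fun n : ℕ => X.S^[n + 1])

/-- `(X,σ)` is non-tame if `|E(X)| > 2^ℵ₀`. -/
def NonTame : Prop := Cardinal.continuum < Cardinal.mk ↥X.Ellis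

end BinarySubshift

/-- `𝒯` is a choice domain: for all `m, n`, any `n` distinct points of `𝒯` and any
choice functions `φ¹,…,φⁿ ∈ {0,1}^m` there are times `m < τ₁ < … < τ_m` realising
the prescribed values. -/
def IsChoiceDomain (𝒯 : Set BinSeq) : Prop :=
  ∀ (m n : ℕ) (x : Fin n → BinSeq), (∀ i, x i ∈ 𝒯) → Function.Injective x →
    ∀ φ : Fin n → Fin m → Bool, ∃ τ : Fin m → ℕ,
      StrictMono τ ∧ (∀ k, m < τ k) ∧ ∀ i k, x i (τ k) = φ i k

/-- `J` is an independence set for the pair `(A0, A1)` in `C`. -/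
def IsIndependenceSet (C A0 A1 : Set BinSeq) (J : Set ℕ) : Prop :=
  ∀ I : Finset ℕ, ↑I ⊆ J → ∀ φ : ℕ → Bool, ∃ x ∈ C, ∀ i ∈ I,
    binShift^[i] x ∈ (if φ i = true then A1 else A0)

-- ===== auxiliary lemmas =====

lemma binShift_iterate_apply (k : ℕ) (x : BinSeq) (n : ℕ) :
    binShift^[k] x n = x (n + k) := by
  induction k generalizing x n with
  | zero => rfl
  | succ k ih => rw [Function.iterate_succ_apply, ih]; rfl

lemma coe_S_iterate (X : BinarySubshift) (k : ℕ) (x : X.carrier) :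
    ((X.S^[k] x : X.carrier) : BinSeq) = binShift^[k] (x : BinSeq) := by
  induction k generalizing x with
  | zero => rfl
  | succ k ih =>
      rw [Function.iterate_succ_apply, Function.iterate_succ_apply, ih]
      rfl

lemma BinarySubshift.realize (X : BinarySubshift) (k : ℕ → ℕ) (hk : ∀ n, 1 ≤ k n)
    {ι : Type} (pt : ι → X.carrier) (f : ι → Bool)
    (hfip : ∀ F : Finset ι, ∃ n, ∀ i ∈ F, (pt i : BinSeq) (k n) = f i) :
    ∃ η ∈ X.Ellis, ∀ i, ((η (pt i) : X.carrier) : BinSeq) 0 = f i := by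
  classical
  haveI : CompactSpace X.carrier := isCompact_iff_compactSpace.mp X.isClosed.isCompact
  set A : Finset ι → Set ℕ := fun F => {n | ∀ i ∈ F, (pt i : BinSeq) (k n) = f i} with hAdef
  have hdir : Directed (· ≥ ·) fun F => (𝓟 (A F) : Filter ℕ) := by
    intro F G
    refine ⟨F ∪ G, principal_mono.2 fun n hn i hi => hn i (by simp [hi]),
      principal_mono.2 fun n hn i hi => hn i (by simp [hi])⟩
  have hne : ∀ F, NeBot (𝓟 (A F)) := fun F => principal_neBot_iff.mpr ((hfip F).imp fun n hn => hn)
  haveI : NeBot (⨅ F, 𝓟 (A F)) := iInf_neBot_of_directed hdir hne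
  set p : Ultrafilter ℕ := Ultrafilter.of (⨅ F, 𝓟 (A F)) with hp
  have hmemp : ∀ F, A F ∈ p := fun F => Ultrafilter.of_le _ (mem_iInf_of_mem F (mem_principal_self _))
  set g : ℕ → X.carrier → X.carrier := fun n => X.S^[k n] with hg
  obtain ⟨η, -, hη⟩ := isCompact_univ.ultrafilter_le_nhds (p.map g) (by simp)
  rw [Ultrafilter.coe_map] at hη
  have htend : Tendsto g ↑p (𝓝 η) := hη
  refine ⟨η, ?_, ?_⟩
  · refine mem_closure_of_tendsto htend (Eventually.of_forall fun n => ?_)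
    exact Set.mem_range.mpr ⟨k n - 1, by rw [Nat.sub_add_cancel (hk n)]⟩
  · intro i
    have hcont : Continuous fun h : X.carrier → X.carrier => ((h (pt i) : X.carrier) : BinSeq) 0 :=
      (continuous_apply (0 : ℕ)).comp (continuous_subtype_val.comp (continuous_apply (pt i)))
    have h1 : Tendsto (fun n => ((g n (pt i) : X.carrier) : BinSeq) 0) ↑p
        (𝓝 (((η (pt i) : X.carrier) : BinSeq) 0)) := (hcont.tendsto η).comp htend
    have h2 : Tendsto (fun n => ((g n (pt i) : X.carrier) : BinSeq) 0) ↑p (𝓝 (f i)) := by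
      refine tendsto_const_nhds.congr' ?_
      filter_upwards [hmemp {i}] with n hn
      have hv := hn i (Finset.mem_singleton_self i)
      have : ((g n (pt i) : X.carrier) : BinSeq) 0 = (pt i : BinSeq) (k n) := by
        rw [hg]; simp only [coe_S_iterate, binShift_iterate_apply, Nat.zero_add]
      rw [this, hv]
    exact tendsto_nhds_unique h1 h2


lemma exists_point (X : BinarySubshift) (𝒯 : Set BinSeq) (hsub : 𝒯 ⊆ X.carrier)
    (j : ℕ → ℕ) (a : ℕ → Bool)
    (h : ∀ m : ℕ, ∃ x ∈ 𝒯, ∀ k < m, x (j k) = a k) :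
    ∃ x ∈ X.carrier, ∀ n, x (j n) = a n := by
  classical
  haveI : CompactSpace X.carrier := isCompact_iff_compactSpace.mp X.isClosed.isCompact
  choose w hwT hw using h
  set q : Ultrafilter ℕ := Ultrafilter.of atTop with hqdef
  have hq : ↑q ≤ (atTop : Filter ℕ) := Ultrafilter.of_le _
  set wb : ℕ → X.carrier := fun m => ⟨w m, hsub (hwT m)⟩ with hwb
  obtain ⟨x, -, hx⟩ := isCompact_univ.ultrafilter_le_nhds (q.map wb) (by simp)
  rw [Ultrafilter.coe_map] at hx
  have htend : Tendsto wb ↑q (𝓝 x) := hx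
  refine ⟨(x : BinSeq), x.2, fun n => ?_⟩
  have hcont : Continuous fun y : X.carrier => (y : BinSeq) (j n) :=
    (continuous_apply (j n)).comp continuous_subtype_val
  have h1 : Tendsto (fun m => (wb m : BinSeq) (j n)) ↑q (𝓝 ((x : BinSeq) (j n))) :=
    (hcont.tendsto x).comp htend
  have h2 : Tendsto (fun m => (wb m : BinSeq) (j n)) ↑q (𝓝 (a n)) := by
    refine tendsto_const_nhds.congr' ?_
    filter_upwards [hq (eventually_ge_atTop (n + 1))] with m hm
    exact (hw m n (by omega)).symm
  exact tendsto_nhds_unique h1 h2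

lemma exists_inj_mem {ι : Type} [DecidableEq ι] (S : ι → Set BinSeq) (s : Finset ι)
    (h : ∀ i ∈ s, (S i).Infinite) :
    ∃ g : ι → BinSeq, Set.InjOn g ↑s ∧ ∀ i ∈ s, g i ∈ S i := by
  classical
  induction s using Finset.induction_on with
  | empty => exact ⟨fun _ _ => false, by simp, by simp⟩
  | @insert a s ha ih =>
    obtain ⟨g, hg1, hg2⟩ := ih fun i hi => h i (Finset.mem_insert_of_mem hi)
    have hfin : (g '' ↑s).Finite := s.finite_toSet.image g
    obtain ⟨v, hv⟩ := ((h a (Finset.mem_insert_self a s)).diff hfin).nonempty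
    refine ⟨Function.update g a v, ?_, ?_⟩
    · rw [Finset.coe_insert, Set.injOn_insert (by simpa using ha)]
      constructor
      · refine hg1.congr fun x hx => ?_
        exact (Function.update_of_ne (show x ≠ a from fun hxa => ha (hxa ▸ Finset.mem_coe.mp hx)) v g).symm
      · rw [Function.update_self]
        rintro ⟨x, hx, hxv⟩
        rw [Function.update_of_ne (show x ≠ a from fun hxa => ha (hxa ▸ Finset.mem_coe.mp hx)) v g] at hxv
        exact hv.2 ⟨x, hx, hxv⟩
    · intro i hi
      rcases Finset.mem_insert.mp hi with rfl | hi'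
      · rw [Function.update_self]; exact hv.1
      · rw [Function.update_of_ne (show i ≠ a from fun hia => ha (hia ▸ hi')) v g]; exact hg2 i hi'

lemma ext_lemma (𝒯 : Set BinSeq) (hcd : IsChoiceDomain 𝒯) {ι : Type} [Fintype ι] [DecidableEq ι]
    (L : ℕ) (𝒮 : ι → Set BinSeq) (hsub : ∀ i, 𝒮 i ⊆ 𝒯)
    (hS : ∀ i, ¬(𝒮 i).Countable) :
    ∃ τ, L < τ ∧ ∀ (i : ι) (b : Bool), ¬({x | x ∈ 𝒮 i ∧ x τ = b}).Countable := by
  classical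
  by_contra hcon
  push_neg at hcon
  set N : ι → Set BinSeq := fun i => ⋃ (t : ℕ) (b : Bool),
    if ({x | x ∈ 𝒮 i ∧ x t = b}).Countable then {x | x ∈ 𝒮 i ∧ x t = b} else ∅ with hN
  have hNc : ∀ i, (N i).Countable := fun i =>
    Set.countable_iUnion fun t => Set.countable_iUnion fun b => by
      split_ifs with h
      exacts [h, Set.countable_empty]
  set S' : ι → Set BinSeq := fun i => 𝒮 i \ N i with hS'
  have hS'unc : ∀ i, ¬(S' i).Countable := by
    intro i hc
    refine hS i ((hc.union (hNc i)).mono fun x hx => ?_)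
    by_cases hxn : x ∈ N i
    exacts [Set.mem_union_right _ hxn, Set.mem_union_left _ ⟨hx, hxn⟩]
  have hS'inf : ∀ i, (S' i).Infinite := by
    intro i
    by_contra hfin
    rw [Set.not_infinite] at hfin
    exact hS'unc i hfin.countable
  obtain ⟨g, hginj, hgmem⟩ := exists_inj_mem (fun p : ι × Bool => S' p.1) Finset.univ
    (fun p _ => hS'inf p.1)
  have hginj' : Function.Injective g := by
    have h1 : Set.InjOn g Set.univ := by simpa using hginj
    exact Set.injOn_univ.mp h1
  set e := Fintype.equivFin (ι × Bool) with he
  obtain ⟨τ, -, hτgt, hτval⟩ := hcd (L + 1) (Fintype.card (ι × Bool)) (fun i => g (e.symm i))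
    (fun i => hsub _ ((hgmem (e.symm i) (Finset.mem_univ _)).1))
    (hginj'.comp e.symm.injective) (fun i _ => (e.symm i).2)
  set t := τ ⟨0, Nat.succ_pos L⟩ with ht
  obtain ⟨i0, b0, hcnt⟩ := hcon t (by have := hτgt ⟨0, Nat.succ_pos L⟩; omega)
  have hside : ∀ x ∈ S' i0, x t ≠ b0 := by
    intro x hx hxb
    apply hx.2
    refine Set.mem_iUnion.mpr ⟨t, Set.mem_iUnion.mpr ⟨b0, ?_⟩⟩
    rw [if_pos hcnt]
    exact ⟨hx.1, hxb⟩
  have hv : ∀ b : Bool, g (i0, b) t = b := by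
    intro b
    have := hτval (e (i0, b)) ⟨0, Nat.succ_pos L⟩
    simpa [ht] using this
  cases hb0 : b0
  · exact hside _ (hgmem (i0, false) (Finset.mem_univ _)) (by rw [hv false, hb0])
  · exact hside _ (hgmem (i0, true) (Finset.mem_univ _)) (by rw [hv true, hb0])


lemma exists_indep (𝒯 : Set BinSeq) (hunc : ¬𝒯.Countable) (hcd : IsChoiceDomain 𝒯) :
    ∃ j : ℕ → ℕ, (∀ n, 1 ≤ j n) ∧
      ∀ (m : ℕ) (a : ℕ → Bool), ∃ x ∈ 𝒯, ∀ k < m, x (j k) = a k := by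
  classical
  let Good : (m : ℕ) → (Fin m → ℕ) → Prop := fun m jv =>
    (∀ k, 1 ≤ jv k) ∧ ∀ φ : Fin m → Bool, ¬({x | x ∈ 𝒯 ∧ ∀ k, x (jv k) = φ k}).Countable
  have base : Good 0 (fun k => k.elim0) := by
    refine ⟨fun k => k.elim0, fun φ => ?_⟩
    have : {x | x ∈ 𝒯 ∧ ∀ k : Fin 0, x ((fun k => k.elim0 : Fin 0 → ℕ) k) = φ k} = 𝒯 := by
      ext x
      constructor
      · rintro ⟨h, -⟩; exact h
      · intro h; exact ⟨h, fun k => k.elim0⟩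
    rw [this]; exact hunc
  have step : ∀ m (jv : Fin m → ℕ), Good m jv → ∃ τ, Good (m + 1) (Fin.snoc jv τ) := by
    intro m jv hgood
    obtain ⟨τ, hτL, hτ⟩ := ext_lemma 𝒯 hcd (ι := Fin m → Bool) 1
      (fun φ => {x | x ∈ 𝒯 ∧ ∀ k, x (jv k) = φ k}) (fun φ x hx => hx.1) hgood.2
    refine ⟨τ, ⟨?_, ?_⟩⟩
    · intro k
      cases k using Fin.lastCases with
      | last => rw [Fin.snoc_last]; omega
      | cast k => rw [Fin.snoc_castSucc]; exact hgood.1 k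
    · intro φ
      have hset : {x | x ∈ 𝒯 ∧ ∀ k : Fin (m + 1), x ((Fin.snoc jv τ : Fin (m+1) → ℕ) k) = φ k} =
          {x | x ∈ {x | x ∈ 𝒯 ∧ ∀ k : Fin m, x (jv k) = φ (Fin.castSucc k)} ∧ x τ = φ (Fin.last m)} := by
        ext x
        constructor
        · rintro ⟨hT, hall⟩
          refine ⟨⟨hT, fun k => ?_⟩, ?_⟩
          · have := hall (Fin.castSucc k); rwa [Fin.snoc_castSucc] at this
          · have := hall (Fin.last m); rwa [Fin.snoc_last] at this
        · rintro ⟨⟨hT, hall⟩, hlast⟩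
          refine ⟨hT, fun k => ?_⟩
          cases k using Fin.lastCases with
          | last => rwa [Fin.snoc_last]
          | cast k => rw [Fin.snoc_castSucc]; exact hall k
      rw [hset]
      exact hτ (fun k => φ (Fin.castSucc k)) (φ (Fin.last m))
  let T : (m : ℕ) → {jv : Fin m → ℕ // Good m jv} := fun m =>
    Nat.rec ⟨fun k => k.elim0, base⟩
      (fun m ih => ⟨Fin.snoc ih.1 (step m ih.1 ih.2).choose, (step m ih.1 ih.2).choose_spec⟩) m
  let j : ℕ → ℕ := fun n => (T (n + 1)).1 (Fin.last n)
  have hcoh : ∀ m (k : Fin m), (T m).1 k = j k := by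
    intro m
    induction m with
    | zero => exact fun k => k.elim0
    | succ m ih =>
      intro k
      cases k using Fin.lastCases with
      | last => rfl
      | cast k =>
        have h1 : (T (m + 1)).1 = Fin.snoc (T m).1 (step m (T m).1 (T m).2).choose := rfl
        rw [h1, Fin.snoc_castSucc]
        exact ih k
  refine ⟨j, fun n => ?_, fun m a => ?_⟩
  · have := (T (n + 1)).2.1 (Fin.last n)
    rwa [hcoh] at this
  · have hne := (T m).2.2 (fun k => a k)
    have hnon : {x | x ∈ 𝒯 ∧ ∀ k : Fin m, x ((T m).1 k) = a k}.Nonempty := by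
      rw [Set.nonempty_iff_ne_empty]
      intro hemp
      rw [hemp] at hne
      exact hne Set.countable_empty
    obtain ⟨x, hxT, hxk⟩ := hnon
    refine ⟨x, hxT, fun k hk => ?_⟩
    have := hxk ⟨k, hk⟩
    rwa [hcoh m ⟨k, hk⟩] at this

lemma exists_indep_family :
    ∃ a : (ℕ → Bool) → ℕ → Bool,
      ∀ (G : Finset (ℕ → Bool)) (f : (ℕ → Bool) → Bool), ∃ n, ∀ z ∈ G, a z n = f z := by
  classical
  haveI dC : Denumerable (Finset ℕ × Finset (Finset ℕ)) := Denumerable.ofEncodableOfInfinite _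
  set e := Denumerable.eqv (Finset ℕ × Finset (Finset ℕ)) with he
  refine ⟨fun z n => decide ((e.symm n).1.filter (fun i => z i = true) ∈ (e.symm n).2), ?_⟩
  intro G f
  have hwit : ∀ z z' : ℕ → Bool, z ≠ z' → ∃ n, z n ≠ z' n := fun z z' h => Function.ne_iff.mp h
  set F : Finset ℕ := (G ×ˢ G).biUnion
    (fun p => if h : p.1 = p.2 then ∅ else {(hwit p.1 p.2 h).choose}) with hF
  have hsep : ∀ z ∈ G, ∀ z' ∈ G,
      F.filter (fun i => z i = true) = F.filter (fun i => z' i = true) → z = z' := by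
    intro z hz z' hz' hfe
    by_contra hne
    have hmemF : (hwit z z' hne).choose ∈ F := by
      refine Finset.mem_biUnion.mpr ⟨(z, z'), Finset.mem_product.mpr ⟨hz, hz'⟩, ?_⟩
      rw [dif_neg hne]
      exact Finset.mem_singleton_self _
    have hspec := (hwit z z' hne).choose_spec
    have hiff := Finset.ext_iff.mp hfe (hwit z z' hne).choose
    simp only [Finset.mem_filter, hmemF, true_and] at hiff
    cases hzz : z (hwit z z' hne).choose <;> cases hzz' : z' (hwit z z' hne).choose <;> simp_all
  set FF : Finset (Finset ℕ) :=
    (G.filter fun z => f z = true).image (fun z => F.filter (fun i => z i = true)) with hFF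
  refine ⟨e (F, FF), fun z hz => ?_⟩
  simp only [Equiv.symm_apply_apply]
  by_cases hf : f z = true
  · rw [hf]
    exact decide_eq_true (Finset.mem_image.mpr ⟨z, Finset.mem_filter.mpr ⟨hz, hf⟩, rfl⟩)
  · have hf' : f z = false := by simpa using hf
    rw [hf']
    refine decide_eq_false ?_
    intro hmem
    obtain ⟨z', hz'mem, heq⟩ := Finset.mem_image.mp hmem
    obtain ⟨hz'G, hfz'⟩ := Finset.mem_filter.mp hz'mem
    have := hsep z' hz'G z hz heq
    rw [this] at hfz'
    rw [hfz'] at hf'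
    simp at hf'


/-- If a binary subshift admits an uncountable choice domain `𝒯`,
then every `f : 𝒯 → {0,1}` is realised at the first coordinate by some
`η ∈ E(X)`; consequently `|E(X)| > 2^ℵ₀`, i.e. `(X,σ)` is non-tame. -/
theorem subshift_choice_domain_implies_nontame (X : BinarySubshift)
    (𝒯 : Set BinSeq) (hsub : 𝒯 ⊆ X.carrier) (hunc : ¬𝒯.Countable)
    (hcd : IsChoiceDomain 𝒯) :
    (∀ f : ↥𝒯 → Bool, ∃ η ∈ X.Ellis, ∀ x : ↥𝒯,
      (η ⟨(x : BinSeq), hsub x.2⟩ : BinSeq) 0 = f x) ∧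
    Cardinal.continuum < Cardinal.mk ↥X.Ellis := by
  classical
  have hpart1 : ∀ f : ↥𝒯 → Bool, ∃ η ∈ X.Ellis, ∀ x : ↥𝒯,
      (η ⟨(x : BinSeq), hsub x.2⟩ : BinSeq) 0 = f x := by
    intro f
    refine X.realize (fun n => n + 1) (fun n => Nat.le_add_left 1 n)
      (fun x : ↥𝒯 => (⟨(x : BinSeq), hsub x.2⟩ : X.carrier)) f ?_
    intro F
    obtain ⟨τ, -, hτgt, hτval⟩ := hcd 1 F.card
      (fun i => (((F.equivFin.symm i : ↥F) : ↥𝒯) : BinSeq))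
      (fun i => ((F.equivFin.symm i : ↥F) : ↥𝒯).2)
      (Subtype.val_injective.comp (Subtype.val_injective.comp F.equivFin.symm.injective))
      (fun i _ => f ((F.equivFin.symm i : ↥F) : ↥𝒯))
    have h2 : 1 < τ 0 := hτgt 0
    refine ⟨τ 0 - 1, fun x hx => ?_⟩
    have hn1 : τ 0 - 1 + 1 = τ 0 := by omega
    have hv := hτval (F.equivFin ⟨x, hx⟩) 0
    simp only [Equiv.symm_apply_apply] at hv
    show ((x : ↥𝒯) : BinSeq) (τ 0 - 1 + 1) = f x
    rw [hn1]
    exact hv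
  refine ⟨hpart1, ?_⟩
  obtain ⟨j, hj1, hjne⟩ := exists_indep 𝒯 hunc hcd
  obtain ⟨a, ha⟩ := exists_indep_family
  have hpt : ∀ z : ℕ → Bool, ∃ x ∈ X.carrier, ∀ n, x (j n) = a z n := fun z =>
    exists_point X 𝒯 hsub j (a z) (fun m => hjne m (a z))
  choose xp hxpX hxp using hpt
  have hreal : ∀ f : (ℕ → Bool) → Bool, ∃ η ∈ X.Ellis,
      ∀ z, ((η ⟨xp z, hxpX z⟩ : X.carrier) : BinSeq) 0 = f z := by
    intro f
    refine X.realize j hj1 (fun z => (⟨xp z, hxpX z⟩ : X.carrier)) f ?_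
    intro F
    obtain ⟨n, hn⟩ := ha F f
    exact ⟨n, fun z hz => by show (xp z) (j n) = f z; rw [hxp z n, hn z hz]⟩
  choose η hmem hval using hreal
  have hinj : Function.Injective η := by
    intro f f' h
    funext z
    rw [← hval f z, ← hval f' z, h]
  have hle : (2 : Cardinal) ^ Cardinal.continuum ≤ Cardinal.mk ↥X.Ellis := by
    have hinj2 : Function.Injective (fun f : (ℕ → Bool) → Bool => (⟨η f, hmem f⟩ : ↥X.Ellis)) :=
      fun f f' h => hinj (congrArg Subtype.val h)
    have hmk := Cardinal.mk_le_of_injective hinj2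
    have e1 : Cardinal.mk (ℕ → Bool) = Cardinal.continuum := by
      rw [← Cardinal.power_def, Cardinal.mk_bool, Cardinal.mk_nat, Cardinal.two_power_aleph0]
    have e2 : Cardinal.mk ((ℕ → Bool) → Bool) = 2 ^ Cardinal.continuum := by
      rw [← Cardinal.power_def, Cardinal.mk_bool, e1]
    rwa [e2] at hmk
  exact lt_of_lt_of_le (Cardinal.cantor _) hle
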